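/- Fix μ > 0. For the CHKS function p_μ(z) = (z + √(z² + 4μ²))/2 on ℝ, and for any 0 < ν ≤ μ and any z, |p_μ(z) - p_ν(z)| ≤ μ - ν; in particular p is Lipschitz continuous with modulus 1 in the smoothing parameter. -/
import Mathlib

theorem stmt_15 (μ ν z : ℝ) (hν : 0 < ν) (hνμ : ν ≤ μ) :
    |(z + Real.sqrt (z ^ 2 + 4 * μ ^ 2)) / 2 - (z + Real.sqrt (z ^ 2 + 4 * ν ^ 2)) / 2|
      ≤ μ - ν := by
  have hμ : 0 < μ := lt_of_lt_of_le hν hνμ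
  have ha2 : Real.sqrt (z ^ 2 + 4 * μ ^ 2) ^ 2 = z ^ 2 + 4 * μ ^ 2 :=
    Real.sq_sqrt (by positivity)
  have hb2 : Real.sqrt (z ^ 2 + 4 * ν ^ 2) ^ 2 = z ^ 2 + 4 * ν ^ 2 :=
    Real.sq_sqrt (by positivity)
  have haμ : 2 * μ ≤ Real.sqrt (z ^ 2 + 4 * μ ^ 2) := by
    rw [show 2 * μ = Real.sqrt ((2*μ)^2) from (Real.sqrt_sq (by positivity)).symm]
    exact Real.sqrt_le_sqrt (by nlinarith)
  have hbν : 2 * ν ≤ Real.sqrt (z ^ 2 + 4 * ν ^ 2) := by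
    rw [show 2 * ν = Real.sqrt ((2*ν)^2) from (Real.sqrt_sq (by positivity)).symm]
    exact Real.sqrt_le_sqrt (by nlinarith)
  have hab : Real.sqrt (z ^ 2 + 4 * ν ^ 2) ≤ Real.sqrt (z ^ 2 + 4 * μ ^ 2) :=
    Real.sqrt_le_sqrt (by nlinarith)
  rw [abs_le]
  constructor <;> nlinarith [sq_nonneg (Real.sqrt (z ^ 2 + 4 * μ ^ 2) + Real.sqrt (z ^ 2 + 4 * ν ^ 2))]
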